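/- Let f be a monotone submodular function with f(∅)=0 and curvature c_f, ε ∈ (0,1), and ℓ(S) = (1-ε/2)·∑_{e∈S}(f(E)-f(E\{e})). Then for every S ⊆ E, ℓ(S) ≥ (1 - c_f - ε/2)·f(S). -/

import Mathlib

open Finset

theorem ell_ge_curvature_fraction
    {E : Type*} [Fintype E] [DecidableEq E] [Nonempty E]
    (f : Finset E → ℝ)
    (hmono : ∀ S T : Finset E, S ⊆ T → f S ≤ f T)
    (hsub : ∀ S T : Finset E, f S + f T ≥ f (S ∩ T) + f (S ∪ T))
    (hempty : f ∅ = 0)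
    (hpos : ∀ e : E, 0 < f {e})
    (ε : ℝ) (hε : ε ∈ Set.Ioo (0:ℝ) 1)
    (ℓ : Finset E → ℝ)
    (hℓ : ∀ S : Finset E,
      ℓ S = (1 - ε/2) * ∑ e ∈ S, (f Finset.univ - f (Finset.univ.erase e)))
    (cf : ℝ)
    (hcf : cf = 1 - Finset.univ.inf' Finset.univ_nonempty
      (fun e => (f Finset.univ - f (Finset.univ.erase e)) / f {e})) :
    ∀ S : Finset E, ℓ S ≥ (1 - cf - ε/2) * f S := by
  intro S
  set A : ℝ := Finset.univ.inf' Finset.univ_nonempty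
      (fun e => (f Finset.univ - f (Finset.univ.erase e)) / f {e}) with hA
  have hfnn : ∀ T : Finset E, 0 ≤ f T := fun T => hempty ▸ hmono ∅ T (empty_subset T)
  -- each marginal nonneg
  have hm_nn : ∀ e : E, 0 ≤ f Finset.univ - f (Finset.univ.erase e) := by
    intro e
    have := hmono (Finset.univ.erase e) Finset.univ (erase_subset _ _)
    linarith
  -- marginal ≤ f {e}
  have hm_le : ∀ e : E, f Finset.univ - f (Finset.univ.erase e) ≤ f {e} := by
    intro e
    have h := hsub {e} (Finset.univ.erase e)
    have h1 : ({e} : Finset E) ∩ Finset.univ.erase e = ∅ := by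
      ext x; simp
    have h2 : ({e} : Finset E) ∪ Finset.univ.erase e = Finset.univ := by
      ext x; by_cases hx : x = e <;> simp [hx]
    rw [h1, h2, hempty] at h
    linarith
  have hA_nn : 0 ≤ A := by
    rw [hA]
    apply Finset.le_inf'
    intro e _
    exact div_nonneg (hm_nn e) (hpos e).le
  have hA_le_one : A ≤ 1 := by
    obtain ⟨e⟩ := ‹Nonempty E›
    have h1 : A ≤ (f Finset.univ - f (Finset.univ.erase e)) / f {e} :=
      Finset.inf'_le _ (Finset.mem_univ e)
    have h2 : (f Finset.univ - f (Finset.univ.erase e)) / f {e} ≤ 1 :=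
      (div_le_one (hpos e)).2 (hm_le e)
    linarith
  -- marginal ≥ A * f {e}
  have hmarg : ∀ e : E, A * f {e} ≤ f Finset.univ - f (Finset.univ.erase e) := by
    intro e
    have h1 : A ≤ (f Finset.univ - f (Finset.univ.erase e)) / f {e} :=
      Finset.inf'_le _ (Finset.mem_univ e)
    calc A * f {e} ≤ ((f Finset.univ - f (Finset.univ.erase e)) / f {e}) * f {e} :=
          mul_le_mul_of_nonneg_right h1 (hpos e).le
      _ = f Finset.univ - f (Finset.univ.erase e) := div_mul_cancel₀ _ (hpos e).ne'
  -- f S ≤ ∑ f{e}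
  have hsum : ∀ S : Finset E, f S ≤ ∑ e ∈ S, f {e} := by
    intro S
    induction S using Finset.induction_on with
    | empty => simp [hempty]
    | @insert a s ha ih =>
      have h := hsub {a} s
      have h1 : ({a} : Finset E) ∩ s = ∅ := by
        ext x; simp; rintro rfl; exact ha
      have h2 : ({a} : Finset E) ∪ s = insert a s := by
        ext x; simp
      rw [h1, h2, hempty] at h
      rw [Finset.sum_insert ha]
      linarith
  have key : A * f S ≤ ∑ e ∈ S, (f Finset.univ - f (Finset.univ.erase e)) := by
    calc A * f S ≤ A * ∑ e ∈ S, f {e} :=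
          mul_le_mul_of_nonneg_left (hsum S) hA_nn
      _ = ∑ e ∈ S, A * f {e} := Finset.mul_sum _ _ _
      _ ≤ ∑ e ∈ S, (f Finset.univ - f (Finset.univ.erase e)) :=
          Finset.sum_le_sum (fun e _ => hmarg e)
  rw [hℓ, hcf]
  obtain ⟨hε0, hε1⟩ := hε
  have hεhalf : (0:ℝ) < 1 - ε/2 := by linarith
  have hfS : 0 ≤ f S := hfnn S
  have : (1 - (1 - A) - ε/2) * f S ≤ (1 - ε/2) * (A * f S) := by
    nlinarith [mul_nonneg (mul_nonneg (by linarith : (0:ℝ) ≤ ε/2) (by linarith : (0:ℝ) ≤ 1-A)) hfS]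
  calc (1 - (1 - A) - ε/2) * f S ≤ (1 - ε/2) * (A * f S) := this
    _ ≤ (1 - ε/2) * ∑ e ∈ S, (f Finset.univ - f (Finset.univ.erase e)) :=
        mul_le_mul_of_nonneg_left key hεhalf.le
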